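/- Every vector u ∈ A₅* that is not orthogonal to any root of A₅ satisfies u·u ≥ 35/2, with equality attained by v = (1/2)(−5,−3,−1,1,3,5) and its coordinate permutations. -/

import Mathlib

lemma gap6 : ∀ (n : ℕ) (g : Fin 6 → ℤ), StrictMono g → ∀ i j : Fin 6,
    i.val + n = j.val → (n : ℤ) ≤ g j - g i := by
  intro n
  induction n with
  | zero =>
    intro g hg i j h
    have : i = j := Fin.ext (by omega)
    simp [this]
  | succ n ih =>
    intro g hg i j h
    have hi : i.val + 1 < 6 := by omega
    have h1 : g i < g ⟨i.val + 1, hi⟩ := hg (by simp [Fin.lt_def])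
    have h2 : (n : ℤ) ≤ g j - g ⟨i.val + 1, hi⟩ := ih g hg ⟨i.val + 1, hi⟩ j (by simp; omega)
    push_cast
    omega

lemma pair_sq (g : Fin 6 → ℤ) (hg : StrictMono g) (i j : Fin 6) :
    ((i : ℤ) - (j : ℤ)) ^ 2 ≤ (g i - g j) ^ 2 := by
  rcases le_total i j with h | h
  · have h0 : (i : ℕ) ≤ (j : ℕ) := h
    have := gap6 ((j : ℕ) - (i : ℕ)) g hg i j (by omega)
    have hc : ((j : ℤ) - (i : ℤ)) ≤ g j - g i := by
      push_cast [Nat.cast_sub h0] at this; linarith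
    have h0' : (0 : ℤ) ≤ (j : ℤ) - (i : ℤ)  := by
      have := h0; push_cast; omega
    nlinarith
  · have h0 : (j : ℕ) ≤ (i : ℕ) := h
    have := gap6 ((i : ℕ) - (j : ℕ)) g hg j i (by omega)
    have hc : ((i : ℤ) - (j : ℤ)) ≤ g i - g j := by
      push_cast [Nat.cast_sub h0] at this; linarith
    have h0' : (0 : ℤ) ≤ (i : ℤ) - (j : ℤ)  := by
      have := h0; push_cast; omega
    nlinarith

lemma bound6 (b : Fin 6 → ℤ) (hb : Function.Injective b) :
    105 ≤ 6 * ∑ i, b i ^ 2 - (∑ i, b i) ^ 2 := by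
  set σ := Tuple.sort b with hσ
  have hmono : Monotone (b ∘ σ) := Tuple.monotone_sort b
  have hsm : StrictMono (b ∘ σ) := hmono.strictMono_of_injective (hb.comp σ.injective)
  have hsum : ∑ i, b (σ i) = ∑ i, b i := Equiv.sum_comp σ b
  have hsq : ∑ i, b (σ i) ^ 2 = ∑ i, b i ^ 2 := Equiv.sum_comp σ (fun j => b j ^ 2)
  rw [← hsum, ← hsq]
  have pair : ∀ i j : Fin 6, ((i : ℤ) - (j : ℤ)) ^ 2 ≤ (b (σ i) - b (σ j)) ^ 2 :=
    fun i j => pair_sq (b ∘ σ) hsm i j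
  have H : (210 : ℤ) ≤ ∑ i : Fin 6, ∑ j : Fin 6, (b (σ i) - b (σ j)) ^ 2 := by
    calc (210 : ℤ) = ∑ i : Fin 6, ∑ j : Fin 6, ((i : ℤ) - (j : ℤ)) ^ 2 := by decide
    _ ≤ _ := Finset.sum_le_sum fun i _ => Finset.sum_le_sum fun j _ => pair i j
  have identity : ∑ i : Fin 6, ∑ j : Fin 6, (b (σ i) - b (σ j)) ^ 2
      = 12 * ∑ i, b (σ i) ^ 2 - 2 * (∑ i, b (σ i)) ^ 2 := by
    simp [Fin.sum_univ_six]; ring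
  linarith

/-- Every vector of `A₅*` not orthogonal to any root has norm at least `35/2`,
with equality attained by `v = (1/2)(−5,−3,−1,1,3,5)` and its permutations. -/
theorem stmt6 (v : Fin 6 → ℚ)
    (hv : v = ![-5/2, -3/2, -1/2, 1/2, 3/2, 5/2]) :
    (∀ u : Fin 6 → ℚ, ∑ i, u i = 0 →
      (∀ w : Fin 6 → ℚ, (∀ i, ∃ m : ℤ, w i = (m : ℚ)) → ∑ i, w i = 0 →
        ∃ m : ℤ, ∑ i, u i * w i = (m : ℚ)) →
      (∀ i j : Fin 6, i ≠ j →
        ∑ k, u k * ((Pi.single i 1 - Pi.single j 1 : Fin 6 → ℚ) k) ≠ 0) →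
      35 / 2 ≤ ∑ i, u i * u i) ∧
    (∀ σ : Equiv.Perm (Fin 6), ∑ i, v (σ i) * v (σ i) = 35 / 2) := by
  constructor
  · intro u hsum hdual hroot
    -- pairing with e_i - e_0 gives u i - u 0 ∈ ℤ
    have hpair : ∀ i j : Fin 6,
        ∑ k, u k * ((Pi.single i 1 - Pi.single j 1 : Fin 6 → ℚ) k) = u i - u j := by
      intro i j
      simp [Pi.single_apply, mul_sub, mul_ite, Finset.sum_sub_distrib,
        Finset.sum_ite_eq']
    have hint : ∀ i : Fin 6, ∃ m : ℤ, u i - u 0 = (m : ℚ) := by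
      intro i
      obtain ⟨m, hm⟩ := hdual (Pi.single i 1 - Pi.single 0 1)
        (by
          intro k
          refine ⟨(if k = i then 1 else 0) - (if k = 0 then 1 else 0), ?_⟩
          push_cast
          simp [Pi.single_apply])
        (by simp [Finset.sum_sub_distrib, Pi.single_apply, Finset.sum_ite_eq'])
      exact ⟨m, by rw [← hpair i 0]; exact hm⟩
    choose b hb using hint
    have hbinj : Function.Injective b := by
      intro i j hij
      by_contra hne
      apply hroot i j hne
      rw [hpair i j]
      have : u i - u 0 = u j - u 0 := by rw [hb i, hb j, hij]
      linarith
    have key := bound6 b hbinj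
    have key' : (105 : ℚ) ≤ 6 * ∑ i, ((b i : ℚ)) ^ 2 - (∑ i, (b i : ℚ)) ^ 2 := by
      exact_mod_cast key
    have hbi : ∀ i, (b i : ℚ) = u i - u 0 := fun i => (hb i).symm
    simp only [hbi] at key'
    simp only [Fin.sum_univ_six] at key' hsum ⊢
    nlinarith [key', hsum, sq_nonneg (u 0 + u 1 + u 2 + u 3 + u 4 + u 5)]
  · intro σ
    have := Equiv.sum_comp σ (fun j => v j * v j)
    rw [this, hv]
    rw [Fin.sum_univ_six]
    show ((-5/2*(-5/2) + -3/2*(-3/2) + -1/2*(-1/2) + 1/2*(1/2) + 3/2*(3/2) + 5/2*(5/2)) : ℚ) = 35/2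
    norm_num
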